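/- arXiv:2512.03990 — 2 statements merged into one kernel-verified Lean document; each statement's English description precedes it below -/
import Mathlib

section
/- Let n ∈ ℕ, λ, b, k_C ∈ ℝ with b ≠ 0, Γ > 0. Let y, y_d : ℝ → ℝ be twice differentiable, f, ε : ℝ → ℝ, μ : ℝ → ℝⁿ, W ∈ ℝⁿ a constant vector, and Ŵ : ℝ → ℝⁿ differentiable. Define e = y − y_d, s = e' + λe, the uncertainty Δ(t) = ⟨W, μ(t)⟩ + ε(t), its estimate Δ̂(t) = ⟨Ŵ(t), μ(t)⟩, and suppose: (i) y''(t) = f(t) + b·u(t) + Δ(t) with u(t) = b⁻¹(−f(t) − Δ̂(t) + y_d''(t) − k_C·s(t) − λ·e'(t)); (ii) the updating rule Ŵ'(t) = Γ·μ(t)·s(t) holds. Then the Lyapunov function V(t) = ½(s(t)² + Γ⁻¹‖Ŵ(t) − W‖²) is differentiable and satisfies V'(t) = s(t)·(−k_C·s(t) + ε(t)) for all t. -/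
/-- Simple learning method: under the control law and update rule
`Ŵ' = Γ·μ·s`, the Lyapunov function `V = ½(s² + Γ⁻¹‖Ŵ − W‖²)` is
differentiable with `V' = s·(−k_C·s + ε)`. -/
theorem stmt_4 (n : ℕ) (lam b k_C Γ : ℝ) (hb : b ≠ 0) (hΓ : 0 < Γ)
    (y y_d : ℝ → ℝ)
    (hy : Differentiable ℝ y) (hy' : Differentiable ℝ (deriv y))
    (hyd : Differentiable ℝ y_d) (hyd' : Differentiable ℝ (deriv y_d))
    (f ε u : ℝ → ℝ) (μ : ℝ → EuclideanSpace ℝ (Fin n))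
    (W : EuclideanSpace ℝ (Fin n)) (What : ℝ → EuclideanSpace ℝ (Fin n))
    (hWhat : Differentiable ℝ What)
    (e s Δ Δhat V : ℝ → ℝ)
    (he : e = fun t => y t - y_d t)
    (hs : s = fun t => deriv e t + lam * e t)
    (hΔ : Δ = fun t => (inner ℝ W (μ t) : ℝ) + ε t)
    (hΔhat : Δhat = fun t => (inner ℝ (What t) (μ t) : ℝ))
    (hdyn : ∀ t, deriv (deriv y) t = f t + b * u t + Δ t)
    (hu : ∀ t, u t = b⁻¹ * (-f t - Δhat t + deriv (deriv y_d) t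
      - k_C * s t - lam * deriv e t))
    (hupd : ∀ t, deriv What t = (Γ * s t) • μ t)
    (hV : V = fun t => (1/2) * ((s t) ^ 2 + Γ⁻¹ * ‖What t - W‖ ^ 2)) :
    ∀ t, HasDerivAt V (s t * (-k_C * s t + ε t)) t := by

  intro t
  have hde : deriv e = fun x => deriv y x - deriv y_d x := by
    subst he; funext x; exact deriv_sub (hy x) (hyd x)
  have hsd : HasDerivAt s
      (deriv (deriv y) t - deriv (deriv y_d) t + lam * (deriv y t - deriv y_d t)) t := by
    rw [hs, hde, he]
    exact ((hy' t).hasDerivAt.sub (hyd' t).hasDerivAt).add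
      (((hy t).hasDerivAt.sub (hyd t).hasDerivAt).const_mul lam)
  have hval : deriv (deriv y) t - deriv (deriv y_d) t + lam * (deriv y t - deriv y_d t)
      = -(inner ℝ (What t - W) (μ t) : ℝ) + ε t - k_C * s t := by
    have h1 := hdyn t
    rw [hu t, mul_inv_cancel_left₀ hb] at h1
    simp only [hΔ, hΔhat, hde] at h1
    rw [inner_sub_left]
    linarith [h1]
  have hsd' : HasDerivAt s (-(inner ℝ (What t - W) (μ t) : ℝ) + ε t - k_C * s t) t := by
    rw [← hval]; exact hsd
  have hg : HasDerivAt (fun x => What x - W) ((Γ * s t) • μ t) t := by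
    rw [← hupd t]
    exact (hWhat t).hasDerivAt.sub_const W
  have hinn := hg.inner ℝ hg
  have hVeq : V = fun x => (1/2) * ((s x) ^ 2 + Γ⁻¹ * (inner ℝ (What x - W) (What x - W) : ℝ)) := by
    rw [hV]; funext x; rw [real_inner_self_eq_norm_sq]
  rw [hVeq]
  have hD := ((hsd'.pow 2).add (hinn.const_mul Γ⁻¹)).const_mul (1/2 : ℝ)
  convert hD using 1
  case e'_4 => rfl
  case e'_5 => rfl
  case e'_8 => rfl
  rw [real_inner_smul_left, real_inner_smul_right, real_inner_comm (What t - W) (μ t)]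
  have hΓ' : Γ ≠ 0 := hΓ.ne'
  field_simp
  ring
end

section
/- Let n ∈ ℕ, λ, λ_D, b, k_C, k_SE, k_D ∈ ℝ with b ≠ 0, Γ > 0. Let y, y_d, ŷ : ℝ → ℝ be twice differentiable, f, ε : ℝ → ℝ, μ : ℝ → ℝⁿ, W ∈ ℝⁿ constant, Ŵ : ℝ → ℝⁿ differentiable. Define e = y − y_d, s = e' + λe, e_D = ŷ − y, s_D = e_D' + λ_D·e_D, Δ(t) = ⟨W, μ(t)⟩ + ε(t), Δ̂(t) = ⟨Ŵ(t), μ(t)⟩. Suppose: (i) y''(t) = f(t) + b·u(t) + Δ(t) with control law u(t) = b⁻¹(−f(t) − Δ̂(t) + y_d''(t) − k_C·s(t) − λ·e'(t)); (ii) the state estimator satisfies ŷ''(t) = f(t) + b·u(t) + Δ̂(t) − k_SE·s_D(t) − λ_D·e_D'(t); (iii) the composite updating rule Ŵ'(t) = Γ·μ(t)·(s(t) − k_D·s_D(t)) holds. Then the composite Lyapunov function V(t) = ½(s(t)² + k_D·s_D(t)² + Γ⁻¹‖Ŵ(t) − W‖²) is differentiable and satisfies V'(t) = s(t)·(−k_C·s(t)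 + ε(t)) + k_D·s_D(t)·(−k_SE·s_D(t) − ε(t)) for all t. -/
/-- Composite learning method: with the control law, the state estimator, and
the composite update rule `Ŵ' = Γ·μ·(s − k_D·s_D)`, the composite Lyapunov
function `V = ½(s² + k_D·s_D² + Γ⁻¹‖Ŵ − W‖²)` is differentiable with
`V' = s(−k_C s + ε) + k_D s_D(−k_SE s_D − ε)`. -/
theorem stmt_9 (n : ℕ) (lam lam_D b k_C k_SE k_D Γ : ℝ) (hb : b ≠ 0) (hΓ : 0 < Γ)
    (y y_d yhat : ℝ → ℝ)
    (hy : Differentiable ℝ y) (hy' : Differentiable ℝ (deriv y))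
    (hyd : Differentiable ℝ y_d) (hyd' : Differentiable ℝ (deriv y_d))
    (hyhat : Differentiable ℝ yhat) (hyhat' : Differentiable ℝ (deriv yhat))
    (f ε u : ℝ → ℝ) (μ : ℝ → EuclideanSpace ℝ (Fin n))
    (W : EuclideanSpace ℝ (Fin n)) (What : ℝ → EuclideanSpace ℝ (Fin n))
    (hWhat : Differentiable ℝ What)
    (e s e_D s_D Δ Δhat V : ℝ → ℝ)
    (he : e = fun t => y t - y_d t)
    (hs : s = fun t => deriv e t + lam * e t)
    (heD : e_D = fun t => yhat t - y t)
    (hsD : s_D = fun t => deriv e_D t + lam_D * e_D t)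
    (hΔ : Δ = fun t => (inner ℝ W (μ t) : ℝ) + ε t)
    (hΔhat : Δhat = fun t => (inner ℝ (What t) (μ t) : ℝ))
    (hdyn : ∀ t, deriv (deriv y) t = f t + b * u t + Δ t)
    (hu : ∀ t, u t = b⁻¹ * (-f t - Δhat t + deriv (deriv y_d) t
      - k_C * s t - lam * deriv e t))
    (hest : ∀ t, deriv (deriv yhat) t
      = f t + b * u t + Δhat t - k_SE * s_D t - lam_D * deriv e_D t)
    (hupd : ∀ t, deriv What t = (Γ * (s t - k_D * s_D t)) • μ t)
    (hV : V = fun t => (1/2) * ((s t) ^ 2 + k_D * (s_D t) ^ 2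
      + Γ⁻¹ * ‖What t - W‖ ^ 2)) :
    ∀ t, HasDerivAt V
      (s t * (-k_C * s t + ε t) + k_D * s_D t * (-k_SE * s_D t - ε t)) t := by
  intro t
  -- first derivatives of e and e_D
  have he1 : ∀ r, deriv e r = deriv y r - deriv y_d r := by
    intro r; rw [he]; exact deriv_sub (hy r) (hyd r)
  have heD1 : ∀ r, deriv e_D r = deriv yhat r - deriv y r := by
    intro r; rw [heD]; exact deriv_sub (hyhat r) (hy r)
  -- HasDerivAt for s
  have hsda : HasDerivAt s ((deriv (deriv y) t - deriv (deriv y_d) t)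
      + lam * (deriv y t - deriv y_d t)) t := by
    have h1 : HasDerivAt (fun r => deriv y r - deriv y_d r + lam * (y r - y_d r))
        ((deriv (deriv y) t - deriv (deriv y_d) t) + lam * (deriv y t - deriv y_d t)) t :=
      (((hy' t).hasDerivAt.sub (hyd' t).hasDerivAt)).add
        (((hy t).hasDerivAt.sub (hyd t).hasDerivAt).const_mul lam)
    have : s = fun r => deriv y r - deriv y_d r + lam * (y r - y_d r) := by
      funext r; simp only [hs]; rw [he1 r, he]
    rw [this]; exact h1
  have hsDda : HasDerivAt s_D ((deriv (deriv yhat) t - deriv (deriv y) t)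
      + lam_D * (deriv yhat t - deriv y t)) t := by
    have h1 : HasDerivAt (fun r => deriv yhat r - deriv y r + lam_D * (yhat r - y r))
        ((deriv (deriv yhat) t - deriv (deriv y) t) + lam_D * (deriv yhat t - deriv y t)) t :=
      (((hyhat' t).hasDerivAt.sub (hy' t).hasDerivAt)).add
        (((hyhat t).hasDerivAt.sub (hy t).hasDerivAt).const_mul lam_D)
    have : s_D = fun r => deriv yhat r - deriv y r + lam_D * (yhat r - y r) := by
      funext r; simp only [hsD]; rw [heD1 r, heD]
    rw [this]; exact h1
  -- simplify the derivative values
  have hbu : b * u t = -f t - Δhat t + deriv (deriv y_d) t - k_C * s t - lam * deriv e t := by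
    rw [hu]; field_simp
  have hsval : (deriv (deriv y) t - deriv (deriv y_d) t) + lam * (deriv y t - deriv y_d t)
      = Δ t - Δhat t - k_C * s t := by
    rw [hdyn, hbu, he1]; ring
  have hsDval : (deriv (deriv yhat) t - deriv (deriv y) t) + lam_D * (deriv yhat t - deriv y t)
      = Δhat t - Δ t - k_SE * s_D t := by
    rw [hest, hdyn, heD1]; ring
  rw [hsval] at hsda
  rw [hsDval] at hsDda
  -- derivative of the norm-squared term
  have hWda : HasDerivAt (fun r => What r - W) (deriv What t) t :=
    (hWhat t).hasDerivAt.sub_const W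
  have hNda : HasDerivAt (fun r => (inner ℝ (What r - W) (What r - W) : ℝ))
      ((inner ℝ (What t - W) (deriv What t) : ℝ) + inner ℝ (deriv What t) (What t - W)) t :=
    hWda.inner ℝ hWda
  have hnorm : ∀ r : ℝ, ‖What r - W‖ ^ 2 = (inner ℝ (What r - W) (What r - W) : ℝ) := by
    intro r; rw [real_inner_self_eq_norm_sq]
  -- assemble V
  have hVda : HasDerivAt V ((1/2) * ((2 * s t * (Δ t - Δhat t - k_C * s t))
      + k_D * (2 * s_D t * (Δhat t - Δ t - k_SE * s_D t))
      + Γ⁻¹ * ((inner ℝ (What t - W) (deriv What t) : ℝ) + inner ℝ (deriv What t) (What t - W)))) t := by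
    rw [hV]
    refine HasDerivAt.const_mul _ ?_
    have h1 : HasDerivAt (fun r => s r ^ 2) (2 * s t * (Δ t - Δhat t - k_C * s t)) t := by
      have := hsda.fun_pow 2; simpa [mul_comm, mul_assoc, mul_left_comm] using this
    have h2 : HasDerivAt (fun r => s_D r ^ 2) (2 * s_D t * (Δhat t - Δ t - k_SE * s_D t)) t := by
      have := hsDda.fun_pow 2; simpa [mul_comm, mul_assoc, mul_left_comm] using this
    have h3 := hNda.const_mul Γ⁻¹
    simp only [hnorm]
    exact (h1.add (h2.const_mul k_D)).add h3
  -- show the derivative value equals the target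
  convert hVda using 1
  have hinner : (inner ℝ (What t - W) (deriv What t) : ℝ) + inner ℝ (deriv What t) (What t - W)
      = 2 * (Γ * (s t - k_D * s_D t)) * (inner ℝ (What t - W) (μ t) : ℝ) := by
    rw [hupd, real_inner_smul_left, real_inner_smul_right, real_inner_comm]; ring
  have hdiff : Δ t - Δhat t = ε t - (inner ℝ (What t - W) (μ t) : ℝ) := by
    rw [hΔ, hΔhat, inner_sub_left]; ring
  have hdiff2 : Δhat t - Δ t = (inner ℝ (What t - W) (μ t) : ℝ) - ε t := by
    rw [hΔ, hΔhat, inner_sub_left]; ring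
  rw [hinner, hdiff, hdiff2]
  field_simp
  ring
end
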